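/- Let x be a continuous semimartingale and let I_h be the pathwise stochastic integral functional with Δ_t I_h = 0, Δ_x I_h(Y_t) = h(Y_{t-}), Δ_{xx} I_h = 0, where h is a regular functional admitting a time derivative Δ_t h. Then at any continuous path Y_t (i.e. Δy_t = y_t - y_{t-} = 0), the Lie bracket of the stochastic integral functional is 𝔏 I_h(Y_t) = -Δ_t h(Y_t). -/

import Mathlib

open Filter Topology MeasureTheory

noncomputable section

/-- Flat extension of a path `Y` at time `t`: constant equal to `Y t` after `t`. -/
def flatExt (t : ℝ) (Y : ℝ → ℝ) : ℝ → ℝ := fun u => if u ≤ t then Y u else Y t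

/-- Bumped path: the value at the current time `t` is shifted by `h`. -/
def bump (t h : ℝ) (Y : ℝ → ℝ) : ℝ → ℝ := fun u => if u = t then Y t + h else Y u

/-- Dupire time functional derivative `Δ_t f (Y_t) = v`. -/
def HasTimeDeriv (f : ℝ → (ℝ → ℝ) → ℝ) (t : ℝ) (Y : ℝ → ℝ) (v : ℝ) : Prop :=
  Tendsto (fun δ : ℝ => (f (t + δ) (flatExt t Y) - f t Y) / δ) (𝓝[>] 0) (𝓝 v)

/-- Dupire space functional derivative `Δ_x f (Y_t) = v`. -/
def HasSpaceDeriv (f : ℝ → (ℝ → ℝ) → ℝ) (t : ℝ) (Y : ℝ → ℝ) (v : ℝ) : Prop :=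
  Tendsto (fun h : ℝ => (f t (bump t h Y) - f t Y) / h) (𝓝[≠] 0) (𝓝 v)


/-- The path `Y_{t-}`: equal to `Y` before `t`, with endpoint value the left limit `y_{t-}`. -/
def pathLeft (t : ℝ) (Z : ℝ → ℝ) : ℝ → ℝ := fun u => if u = t then Function.leftLim Z t else Z u
/-- for the pathwise stochastic integral functional `I_h` (with `Δ_t I_h = 0`,
`Δ_x I_h(Y_t) = h(Y_{t-})`, `Δ_{xx} I_h = 0`), at any continuous path (`Δy_t = 0`) one has
`Δ_x Δ_t I_h (Y_t) = 0` and `Δ_t Δ_x I_h (Y_t) = Δ_t h (Y_t)`, hence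
`𝔏 I_h (Y_t) = -Δ_t h (Y_t)`. -/
theorem statement15 (h I : ℝ → (ℝ → ℝ) → ℝ) (t : ℝ) (Y : ℝ → ℝ) (v : ℝ)
    (hIt : ∀ (s : ℝ) (Z : ℝ → ℝ), HasTimeDeriv I s Z 0)
    (hIx : ∀ (s : ℝ) (Z : ℝ → ℝ), HasSpaceDeriv I s Z (h s (pathLeft s Z)))
    (hcont : Function.leftLim Y t = Y t)
    (hth : HasTimeDeriv h t Y v) :
    -- `Δ_x (Δ_t I_h) (Y_t) = 0`:
    HasSpaceDeriv (fun _ _ => (0:ℝ)) t Y 0 ∧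
    -- `Δ_t (Δ_x I_h) (Y_t) = Δ_t h (Y_t)`:
    HasTimeDeriv (fun s Z => h s (pathLeft s Z)) t Y v ∧
    -- hence `𝔏 I_h (Y_t) = -Δ_t h (Y_t)`:
    (0 : ℝ) - v = -v := by
  refine ⟨?_, ?_, by ring⟩
  · have : (fun h : ℝ => ((0:ℝ) - 0) / h) = fun _ => (0:ℝ) := by
      funext x; simp
    simpa [HasSpaceDeriv, this] using tendsto_const_nhds
  · -- pathLeft t Y = Y
    have hP : pathLeft t Y = Y := by
      funext u
      by_cases hu : u = t
      · simp [pathLeft, hu, hcont]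
      · simp [pathLeft, hu]
    have key : ∀ δ : ℝ, 0 < δ →
        pathLeft (t + δ) (flatExt t Y) = flatExt t Y := by
      intro δ hδ
      have hll : Function.leftLim (flatExt t Y) (t + δ) = Y t := by
        apply leftLim_eq_of_tendsto
        have hmem : Set.Ioo t (t + δ) ∈ 𝓝[<] (t + δ) :=
          Ioo_mem_nhdsLT_of_mem ⟨by linarith, le_refl _⟩
        refine Tendsto.congr' ?_ (tendsto_const_nhds (x := Y t))
        filter_upwards [hmem] with u hu
        simp [flatExt, not_le.2 hu.1]
      funext u
      by_cases hu : u = t + δ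
      · simp [pathLeft, hu, hll, flatExt, not_le.2 (by linarith : t < t + δ)]
      · simp [pathLeft, hu]
    have heq : (fun δ : ℝ =>
          (h (t + δ) (pathLeft (t + δ) (flatExt t Y)) - h t (pathLeft t Y)) / δ)
        =ᶠ[𝓝[>] (0:ℝ)]
        (fun δ : ℝ => (h (t + δ) (flatExt t Y) - h t Y) / δ) := by
      filter_upwards [self_mem_nhdsWithin] with δ hδ
      rw [key δ hδ, hP]
    exact Tendsto.congr' heq.symm hth
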